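/- arXiv:1807.04023 — 3 statements merged into one kernel-verified Lean document; each statement's English description precedes it below -/
import Mathlib

section
/- For ideals A, B of R and a submodule element n of M, A(Bn) = (AB)n. -/
/-- An le-module over a commutative ring `R`: a commutative monoid and complete
lattice with top element `e = ⊤`, addition distributing over arbitrary joins,
with an `R`-action satisfying the le-module axioms. -/
class LeModule (R : Type*) (M : Type*) [CommRing R] extends
    AddCommMonoid M, CompleteLattice M, SMul R M where
  add_sSup : ∀ (m : M) (S : Set M), m + sSup S = ⨆ x ∈ S, m + x
  smul_add' : ∀ (r : R) (m₁ m₂ : M), r • (m₁ + m₂) = r • m₁ + r • m₂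
  add_smul_le : ∀ (r₁ r₂ : R) (m : M), (r₁ + r₂) • m ≤ r₁ • m + r₂ • m
  mul_smul' : ∀ (r₁ r₂ : R) (m : M), (r₁ * r₂) • m = r₁ • (r₂ • m)
  one_smul' : ∀ m : M, (1 : R) • m = m
  zero_smul' : ∀ m : M, (0 : R) • m = (0 : M)
  smul_zero' : ∀ r : R, r • (0 : M) = (0 : M)
  smul_sSup : ∀ (r : R) (S : Set M), r • sSup S = ⨆ x ∈ S, r • x

namespace LeModule

variable (R : Type*) {M : Type*} [CommRing R] [LeModule R M]

/-- `n` is a submodule element: `n + n ≤ n` and `r • n ≤ n` for all `r ∈ R`. -/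
def IsSub (n : M) : Prop := n + n ≤ n ∧ ∀ r : R, r • n ≤ n

variable {R}

/-- `A n = ⋁ { a₁•n + ⋯ + aₖ•n : aᵢ ∈ A }`. -/
def idealSMul (A : Ideal R) (n : M) : M :=
  sSup { m : M | ∃ l : List R, (∀ a ∈ l, a ∈ A) ∧ m = (l.map (fun a => a • n)).sum }

/-- `(n : A) = ⋁ { x ∈ M : A x ≤ n }`. -/
def colonIdeal (n : M) (A : Ideal R) : M := sSup { x : M | idealSMul A x ≤ n }

/-- `(n : r) = ⋁ { x ∈ M : r • x ≤ n }`. -/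
def colonElem (n : M) (r : R) : M := sSup { x : M | r • x ≤ n }

variable (R)

/-- `(k : m) = { r ∈ R : r • m ≤ k }` as a set of ring elements. -/
def colonSet (k m : M) : Set R := { r : R | r • m ≤ k }

/-- `Rad(n) = { a ∈ R : aᵐ • e ≤ n for some positive m }`. -/
def radSet (n : M) : Set R := { a : R | ∃ m : ℕ, 0 < m ∧ a ^ m • (⊤ : M) ≤ n }

/-- A primary element of an le-module. -/
def IsPrimaryElem (q : M) : Prop :=
  IsSub R q ∧ q ≠ ⊤ ∧
    ∀ (a : R) (x : M), a • x ≤ q → x ≤ q ∨ ∃ m : ℕ, 0 < m ∧ a ^ m • (⊤ : M) ≤ q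

/-- A prime submodule element of an le-module. -/
def IsPrimeElem (p : M) : Prop :=
  IsSub R p ∧ p ≠ ⊤ ∧
    ∀ (r : R) (n : M), r • n ≤ p → r • (⊤ : M) ≤ p ∨ n ≤ p

end LeModule

open LeModule

section Aux

variable {R M : Type*} [CommRing R] [LeModule R M]

lemma aux_smul_mono (r : R) {x y : M} (h : x ≤ y) : r • x ≤ r • y := by
  have h2 : sSup ({x, y} : Set M) = y := by
    rw [sSup_pair, sup_eq_right.mpr h]
  have h3 := LeModule.smul_sSup r ({x, y} : Set M)
  rw [h2] at h3
  rw [h3]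
  exact le_iSup₂ (f := fun z (_ : z ∈ ({x, y} : Set M)) => r • z) x (by simp)

lemma aux_add_le_add_right {a b : M} (c : M) (h : a ≤ b) : a + c ≤ b + c := by
  have h2 : sSup ({a, b} : Set M) = b := by
    rw [sSup_pair, sup_eq_right.mpr h]
  have h3 := LeModule.add_sSup (R := R) c ({a, b} : Set M)
  rw [h2] at h3
  calc a + c = c + a := add_comm _ _
    _ ≤ ⨆ z ∈ ({a, b} : Set M), c + z :=
        le_iSup₂ (f := fun z (_ : z ∈ ({a, b} : Set M)) => c + z) a (by simp)
    _ = c + b := h3.symm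
    _ = b + c := add_comm _ _

lemma aux_add_mono {a b c d : M} (h1 : a ≤ b) (h2 : c ≤ d) : a + c ≤ b + d :=
  le_trans (aux_add_le_add_right c h1)
    (by rw [add_comm b c, add_comm b d]; exact aux_add_le_add_right b h2)

lemma aux_zero_le (A : Ideal R) (n : M) : (0 : M) ≤ idealSMul A n :=
  le_sSup ⟨[], by simp, by simp⟩

lemma aux_single {A : Ideal R} {a : R} (ha : a ∈ A) (n : M) :
    a • n ≤ idealSMul A n :=
  le_sSup ⟨[a], by simpa, by simp⟩

lemma aux_add_self (A : Ideal R) (n : M) :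
    idealSMul A n + idealSMul A n ≤ idealSMul A n := by
  unfold idealSMul
  rw [LeModule.add_sSup (R := R)]
  refine iSup₂_le fun x hx => ?_
  rw [add_comm, LeModule.add_sSup (R := R)]
  refine iSup₂_le fun y hy => ?_
  obtain ⟨l1, hl1, rfl⟩ := hx
  obtain ⟨l2, hl2, rfl⟩ := hy
  exact le_sSup ⟨l1 ++ l2, by
    intro a ha
    rcases List.mem_append.mp ha with h | h
    · exact hl1 a h
    · exact hl2 a h, by simp⟩

lemma aux_list_sum_le {X : M} {l : List M} (h0 : (0 : M) ≤ X) (hadd : X + X ≤ X)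
    (h : ∀ x ∈ l, x ≤ X) : l.sum ≤ X := by
  induction l with
  | nil => simpa
  | cons a t ih =>
      rw [List.sum_cons]
      exact le_trans
        (aux_add_mono (h a (List.mem_cons_self (a := a) (l := t)))
          (ih fun x hx => h x (List.mem_cons_of_mem _ hx))) hadd

lemma aux_smul_sum (r : R) (n : M) (l : List R) :
    r • (l.map (fun b => b • n)).sum = (l.map (fun b => (r * b) • n)).sum := by
  induction l with
  | nil => simp [LeModule.smul_zero']
  | cons b t ih =>
      simp only [List.map_cons, List.sum_cons, LeModule.smul_add', ih,
        LeModule.mul_smul']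

end Aux

/-- `A (B n) = (A B) n` for a submodule element `n`. -/
theorem idealSMul_idealSMul {R M : Type*} [CommRing R] [LeModule R M]
    (A B : Ideal R) (n : M) (hn : IsSub R n) :
    idealSMul A (idealSMul B n) = idealSMul (A * B) n := by
  apply le_antisymm
  · refine sSup_le ?_
    rintro m ⟨l, hl, rfl⟩
    refine aux_list_sum_le (aux_zero_le _ _) (aux_add_self _ _) ?_
    intro x hx
    rw [List.mem_map] at hx
    obtain ⟨a, ha, rfl⟩ := hx
    show a • idealSMul B n ≤ idealSMul (A * B) n
    rw [idealSMul, LeModule.smul_sSup]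
    refine iSup₂_le ?_
    rintro x ⟨lb, hlb, rfl⟩
    rw [aux_smul_sum]
    refine le_sSup ⟨lb.map (fun b => a * b), ?_, by rw [List.map_map]; rfl⟩
    intro c hc
    rw [List.mem_map] at hc
    obtain ⟨b, hb, rfl⟩ := hc
    exact Ideal.mul_mem_mul (hl a ha) (hlb b hb)
  · refine sSup_le ?_
    rintro m ⟨l, hl, rfl⟩
    refine aux_list_sum_le (aux_zero_le _ _) (aux_add_self _ _) ?_
    intro x hx
    rw [List.mem_map] at hx
    obtain ⟨c, hc, rfl⟩ := hx
    refine Submodule.mul_induction_on (hl c hc) ?_ ?_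
    · intro a ha b hb
      rw [LeModule.mul_smul']
      exact le_trans (aux_smul_mono a (aux_single hb n)) (aux_single ha _)
    · intro x y hx hy
      calc (x + y) • n ≤ x • n + y • n := LeModule.add_smul_le x y n
        _ ≤ idealSMul A (idealSMul B n) + idealSMul A (idealSMul B n) :=
            aux_add_mono hx hy
        _ ≤ idealSMul A (idealSMul B n) := aux_add_self _ _
end

section
/- Let q be a P-primary element of an le-module M and n ∈ M with n ≰ q. Then (q:n) = { r ∈ R : rn ≤ q } is a P-primary ideal of R. -/
lemma LeModule.smul_mono {R M : Type*} [CommRing R] [LeModule R M]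
    (r : R) {x y : M} (h : x ≤ y) : r • x ≤ r • y := by
  have h2 : r • sSup {x, y} = ⨆ z ∈ ({x, y} : Set M), r • z := LeModule.smul_sSup r _
  have hs : sSup ({x, y} : Set M) = y := by
    rw [sSup_pair, sup_eq_right.mpr h]
  rw [hs] at h2
  rw [h2]
  exact le_biSup _ (by simp)

open LeModule
/-- if `q` is `P`-primary and `n ≰ q`, then `(q : n)` is a
`P`-primary ideal of `R`. -/
theorem colonSet_isPrimary {R M : Type*} [CommRing R] [LeModule R M]
    (P : Ideal R) (hP : P.IsPrime) (q : M)
    (hq : IsPrimaryElem R q) (hrad : radSet R q = (P : Set R))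
    (n : M) (hn : ¬ n ≤ q) :
    ∃ I : Ideal R, (I : Set R) = colonSet R q n ∧ I.IsPrimary ∧ I.radical = P := by
  obtain ⟨⟨hadd, hsmul⟩, hne, hprim⟩ := hq
  have hzero : (0 : M) ≤ q := by
    have := hsmul 0
    rwa [LeModule.zero_smul'] at this
  set I : Ideal R :=
    { carrier := colonSet R q n
      add_mem' := fun {a b} ha hb => by
        have h1 : (a + b) • n ≤ a • n + b • n := LeModule.add_smul_le a b n
        have h2 : a • n + b • n ≤ a • n + q := by
          have h3 := LeModule.add_sSup (R := R) (a • n) {b • n, q}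
          rw [sSup_pair, sup_eq_right.mpr hb] at h3
          rw [h3]; exact le_biSup _ (by simp)
        have h4 : a • n + q ≤ q + q := by
          rw [add_comm]
          have h5 := LeModule.add_sSup (R := R) q {a • n, q}
          rw [sSup_pair, sup_eq_right.mpr ha] at h5
          rw [h5]; exact le_biSup _ (by simp)
        exact le_trans h1 (le_trans h2 (le_trans h4 hadd))
      zero_mem' := by
        show (0 : R) • n ≤ q
        rw [LeModule.zero_smul' (R := R)]; exact hzero
      smul_mem' := fun c x hx => by
        show (c * x) • n ≤ q
        rw [LeModule.mul_smul']
        exact le_trans (LeModule.smul_mono c hx) (hsmul c) } with hI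
  have hmemI : ∀ r : R, r ∈ I ↔ r • n ≤ q := fun r => Iff.rfl
  have hntop : I ≠ ⊤ := by
    intro h
    apply hn
    have h1 : (1 : R) ∈ I := h ▸ Submodule.mem_top
    rw [hmemI, LeModule.one_smul'] at h1
    exact h1
  have hradP : ∀ a : R, a ∈ I.radical ↔ a ∈ P := by
    intro a
    constructor
    · rintro ⟨m, hm⟩
      rw [hmemI] at hm
      have hmpos : 0 < m := by
        rcases Nat.eq_zero_or_pos m with h0 | h0
        · subst h0; rw [pow_zero, LeModule.one_smul'] at hm; exact absurd hm hn
        · exact h0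
      rcases hprim (a ^ m) n hm with h | ⟨k, hk, hle⟩
      · exact absurd h hn
      · have : a ∈ radSet R q := ⟨m * k, Nat.mul_pos hmpos hk, by rwa [pow_mul]⟩
        rwa [hrad] at this
    · intro ha
      have : a ∈ radSet R q := by rw [hrad]; exact ha
      obtain ⟨m, hm, hle⟩ := this
      refine ⟨m, ?_⟩
      rw [hmemI]
      exact le_trans (LeModule.smul_mono (a ^ m) le_top) hle
  refine ⟨I, rfl, ?_, ?_⟩
  · rw [Ideal.isPrimary_iff]
    refine ⟨hntop, fun {x y} hxy => ?_⟩
    rw [hmemI, mul_comm, LeModule.mul_smul'] at hxy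
    rcases hprim y (x • n) hxy with h | ⟨m, hm, hle⟩
    · exact Or.inl h
    · refine Or.inr ((hradP y).mpr ?_)
      have : y ∈ radSet R q := ⟨m, hm, hle⟩
      rwa [hrad] at this
  · ext a; exact hradP a
end

section
/- Let p be a proper submodule element of an le-module M. If (p:e) is a prime ideal of R and p is primary, then p is a prime submodule element. -/
open LeModule
/-- if `(p : e)` is a prime ideal and `p` is primary, then `p` is a
prime submodule element. -/
theorem isPrimeElem_of_colonSet_isPrime_of_isPrimary {R M : Type*} [CommRing R] [LeModule R M]
    (p : M) (P : Ideal R) (hP : (P : Set R) = colonSet R p (⊤ : M)) (hPp : P.IsPrime)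
    (hq : IsPrimaryElem R p) :
    IsPrimeElem R p := by
  obtain ⟨hsub, hne, hprim⟩ := hq
  refine ⟨hsub, hne, fun r n hrn => ?_⟩
  rcases hprim r n hrn with h | ⟨m, hm, hle⟩
  · exact Or.inr h
  · left
    have hmem : r ^ m ∈ P := by
      rw [← SetLike.mem_coe, hP]; exact hle
    have hr : r ∈ P := hPp.mem_of_pow_mem m hmem
    have : r ∈ colonSet R p (⊤ : M) := by rw [← hP] at *; exact hr
    exact this
end
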